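/- Assume each q_i is Lipschitz continuous with Lipschitz constant Q_i, and set Q = max_i Q_i and |α|_∞ = max_i |α_i|. Let f be the bounded fractal function (the unique fixed point of T). Then for every i = 1,…,N, sup_{x, x' ∈ [x_0, x_N)} |f(L_i(x)) − f(L_i(x'))| ≤ |α|_∞ · ω_f(I) + Q · (x_N − x_0), where ω_f(I) = sup_{a, b ∈ I} |f(a) − f(b)| is the oscillation of f on I. -/
import Mathlib


open Set

noncomputable def aC (x : ℕ → ℝ) (N i : ℕ) : ℝ := (x (i + 1) - x i) / (x N - x 0)

noncomputable def bC (x : ℕ → ℝ) (N i : ℕ) : ℝ := (x N * x i - x 0 * x (i + 1)) / (x N - x 0)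

/-- The affine map `L i t = a i * t + b i`. -/
noncomputable def Lm (x : ℕ → ℝ) (N i : ℕ) (t : ℝ) : ℝ := aC x N i * t + bC x N i

/-- Oscillation estimate for the bounded fractal function:
`ω_f (L i (I)) ≤ |α|_∞ ω_f (I) + Q (x N - x 0)`. -/
theorem stmt10
    (N : ℕ) (hN : 2 ≤ N)
    (x : ℕ → ℝ)
    (hx : ∀ i, i < N → x i < x (i + 1))
    (α : ℕ → ℝ) (hα : ∀ i, i < N → |α i| < 1)
    (q : ℕ → ℝ → ℝ) (Qc : ℕ → ℝ)
    (hQc0 : ∀ i, i < N → 0 ≤ Qc i)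
    (hq : ∀ i, i < N → ∀ u ∈ Icc (x 0) (x N), ∀ v ∈ Icc (x 0) (x N),
      |q i u - q i v| ≤ Qc i * |u - v|)
    (f : ℝ → ℝ)
    (hfb : ∃ M, ∀ t ∈ Icc (x 0) (x N), |f t| ≤ M)
    (hfe : ∀ i, i < N → ∀ t ∈ Ico (x 0) (x N), f (Lm x N i t) = α i * f t + q i t)
    (hfeN : f (Lm x N (N - 1) (x N)) = α (N - 1) * f (x N) + q (N - 1) (x N)) :
    ∀ i, i < N →
      (⨆ u : Ico (x 0) (x N), ⨆ v : Ico (x 0) (x N),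
          |f (Lm x N i (u : ℝ)) - f (Lm x N i (v : ℝ))|) ≤
        (Finset.range N).sup' (Finset.nonempty_range_iff.mpr (by omega)) (fun j => |α j|) *
          (⨆ u : Icc (x 0) (x N), ⨆ v : Icc (x 0) (x N), |f (u : ℝ) - f (v : ℝ)|) +
        (Finset.range N).sup' (Finset.nonempty_range_iff.mpr (by omega)) Qc * (x N - x 0) := by
  intro i hi
  obtain ⟨M, hM⟩ := hfb
  -- x 0 < x N
  have hmono : ∀ n, n ≤ N → x 0 ≤ x n := by
    intro n hn
    induction n with
    | zero => exact le_rfl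
    | succ k ih =>
      exact le_trans (ih (by omega)) (le_of_lt (hx k (by omega)))
  have hxN : x 0 < x N := by
    have h1 : x 0 < x 1 := hx 0 (by omega)
    have h2 : x 1 ≤ x N := by
      have : ∀ n, 1 ≤ n → n ≤ N → x 1 ≤ x n := by
        intro n h1n hnN
        induction n with
        | zero => omega
        | succ k ih =>
          rcases Nat.eq_or_lt_of_le h1n with h | h
          · simp [← h]
          · exact le_trans (ih (by omega) (by omega)) (le_of_lt (hx k (by omega)))
      exact this N (by omega) le_rfl
    linarith
  have hne : Nonempty ↥(Ico (x 0) (x N)) := ⟨⟨x 0, le_refl _, hxN⟩⟩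
  have hneC : Nonempty ↥(Icc (x 0) (x N)) := ⟨⟨x 0, le_refl _, le_of_lt hxN⟩⟩
  have hM0 : 0 ≤ M := le_trans (abs_nonneg _) (hM (x 0) ⟨le_refl _, le_of_lt hxN⟩)
  set Aα := (Finset.range N).sup' (Finset.nonempty_range_iff.mpr (by omega : N ≠ 0)) (fun j => |α j|) with hAα
  set QQ := (Finset.range N).sup' (Finset.nonempty_range_iff.mpr (by omega : N ≠ 0)) Qc with hQQ
  set ω := ⨆ u : Icc (x 0) (x N), ⨆ v : Icc (x 0) (x N), |f (u : ℝ) - f (v : ℝ)| with hω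
  -- boundedness facts
  have hbdd_inner : ∀ u : ↥(Icc (x 0) (x N)),
      BddAbove (range fun v : ↥(Icc (x 0) (x N)) => |f (u : ℝ) - f (v : ℝ)|) := by
    intro u
    refine ⟨2 * M, ?_⟩
    rintro y ⟨v, rfl⟩
    have := hM (u : ℝ) u.2
    have := hM (v : ℝ) v.2
    calc |f (u : ℝ) - f (v : ℝ)| ≤ |f (u : ℝ)| + |f (v : ℝ)| := abs_sub _ _
      _ ≤ 2 * M := by linarith
  have hbdd_outer : BddAbove (range fun u : ↥(Icc (x 0) (x N)) =>
      ⨆ v : ↥(Icc (x 0) (x N)), |f (u : ℝ) - f (v : ℝ)|) := by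
    refine ⟨2 * M, ?_⟩
    rintro y ⟨u, rfl⟩
    refine ciSup_le fun v => ?_
    have := hM (u : ℝ) u.2
    have := hM (v : ℝ) v.2
    calc |f (u : ℝ) - f (v : ℝ)| ≤ |f (u : ℝ)| + |f (v : ℝ)| := abs_sub _ _
      _ ≤ 2 * M := by linarith
  have hωle : ∀ u ∈ Icc (x 0) (x N), ∀ v ∈ Icc (x 0) (x N), |f u - f v| ≤ ω := by
    intro u hu v hv
    have h1 : |f u - f v| ≤ ⨆ v' : ↥(Icc (x 0) (x N)), |f u - f (v' : ℝ)| :=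
      le_ciSup (hbdd_inner ⟨u, hu⟩) ⟨v, hv⟩
    exact h1.trans (le_ciSup hbdd_outer ⟨u, hu⟩)
  have hω0 : 0 ≤ ω := by
    have := hωle (x 0) ⟨le_refl _, le_of_lt hxN⟩ (x 0) ⟨le_refl _, le_of_lt hxN⟩
    simpa using this.trans' (abs_nonneg _)
  have hAαi : |α i| ≤ Aα := by
    rw [hAα]; exact Finset.le_sup' (fun j => |α j|) (Finset.mem_range.mpr hi)
  have hAα0 : 0 ≤ Aα := le_trans (abs_nonneg _) hAαi
  have hQi : Qc i ≤ QQ := by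
    rw [hQQ]; exact Finset.le_sup' Qc (Finset.mem_range.mpr hi)
  -- pointwise bound
  have key : ∀ u ∈ Ico (x 0) (x N), ∀ v ∈ Ico (x 0) (x N),
      |f (Lm x N i u) - f (Lm x N i v)| ≤ Aα * ω + QQ * (x N - x 0) := by
    intro u hu v hv
    have huC : u ∈ Icc (x 0) (x N) := Ico_subset_Icc_self hu
    have hvC : v ∈ Icc (x 0) (x N) := Ico_subset_Icc_self hv
    have e1 := hfe i hi u hu
    have e2 := hfe i hi v hv
    have : f (Lm x N i u) - f (Lm x N i v) = α i * (f u - f v) + (q i u - q i v) := by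
      rw [e1, e2]; ring
    rw [this]
    calc |α i * (f u - f v) + (q i u - q i v)|
        ≤ |α i * (f u - f v)| + |q i u - q i v| := abs_add_le _ _
      _ = |α i| * |f u - f v| + |q i u - q i v| := by rw [abs_mul]
      _ ≤ Aα * ω + QQ * (x N - x 0) := by
        have h1 : |α i| * |f u - f v| ≤ Aα * ω :=
          mul_le_mul hAαi (hωle u huC v hvC) (abs_nonneg _) hAα0
        have h2 : |q i u - q i v| ≤ QQ * (x N - x 0) := by
          have h3 : |u - v| ≤ x N - x 0 := by
            rw [abs_sub_le_iff]
            constructor <;> [skip; skip] <;>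
              · cases huC; cases hvC; linarith
          calc |q i u - q i v| ≤ Qc i * |u - v| := hq i hi u huC v hvC
            _ ≤ QQ * (x N - x 0) :=
              mul_le_mul hQi h3 (abs_nonneg _) (le_trans (hQc0 i hi) hQi)
        linarith
  refine ciSup_le fun u => ciSup_le fun v => key u u.2 v v.2
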